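/- Let D : ℝ^{d×N} → ℝ^{d×N} be C¹ with |D(T)| ≤ C₂ for all T, and uniformly h-monotone with a positive nonincreasing continuous function h : [0,∞) → (0,∞), i.e. h(|T|)|B|² ≤ (B,B)_{A(T)} for all T, B. Then ∫₀^∞ h(s) ds ≤ 2 C₂. -/

import Mathlib

open MeasureTheory Filter Topology Set

noncomputable section

/-- The space of real `d × N` matrices with the Frobenius (Euclidean) inner product. -/
abbrev Mat (d N : ℕ) := EuclideanSpace ℝ (Fin d × Fin N)

/-- If `D : ℝ^{d×N} → ℝ^{d×N}` is `C¹` with `|D(T)| ≤ C₂` and uniformly `h`-monotone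
(with `h` positive, nonincreasing and continuous on `[0,∞)`), then `∫₀^∞ h(s) ds ≤ 2C₂`. -/
theorem integral_h_le (d N : ℕ) (hd : 1 ≤ d) (hN : 1 ≤ N)
    (D : Mat d N → Mat d N) (hD : ContDiff ℝ 1 D)
    (C₂ : ℝ) (hC₂ : 0 < C₂) (hbdd : ∀ T : Mat d N, ‖D T‖ ≤ C₂)
    (h : ℝ → ℝ)
    (hpos : ∀ s : ℝ, 0 ≤ s → 0 < h s)
    (hanti : AntitoneOn h (Set.Ici 0))
    (hcont : ContinuousOn h (Set.Ici 0))
    (hmon : ∀ T B : Mat d N, h ‖T‖ * ‖B‖ ^ 2 ≤ (inner ℝ (fderiv ℝ D T B) B : ℝ)) :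
    ∫⁻ s in Set.Ioi (0 : ℝ), ENNReal.ofReal (h s) ≤ ENNReal.ofReal (2 * C₂) := by
  classical
  set B : Mat d N := EuclideanSpace.single (⟨0, hd⟩, ⟨0, hN⟩) (1 : ℝ) with hBdef
  have hBnorm : ‖B‖ = 1 := by
    rw [hBdef, EuclideanSpace.norm_single]; norm_num
  set g : ℝ → ℝ := fun t => inner ℝ (D (t • B)) B with hgdef
  have hDdiff : Differentiable ℝ D := hD.differentiable one_ne_zero
  have hderiv : ∀ t : ℝ, HasDerivAt g (inner ℝ (fderiv ℝ D (t • B) B) B : ℝ) t := by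
    intro t
    have h1 : HasDerivAt (fun t : ℝ => t • B) B t := by
      simpa using (hasDerivAt_id t).smul_const B
    have h2 : HasDerivAt (fun t : ℝ => D (t • B)) (fderiv ℝ D (t • B) B) t :=
      (hDdiff (t • B)).hasFDerivAt.comp_hasDerivAt t h1
    have h3 := h2.inner ℝ (hasDerivAt_const t B)
    simpa using h3
  have hgderivcont : Continuous fun t : ℝ => (inner ℝ (fderiv ℝ D (t • B) B) B : ℝ) := by
    have h1 : Continuous fun t : ℝ => fderiv ℝ D (t • B) :=
      (hD.continuous_fderiv one_ne_zero).comp (continuous_id.smul continuous_const)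
    exact (h1.clm_apply continuous_const).inner continuous_const
  have key : ∀ n : ℕ, ∫ t in (0:ℝ)..(n:ℝ), h t ≤ 2 * C₂ := by
    intro n
    have hn0 : (0:ℝ) ≤ (n:ℝ) := n.cast_nonneg
    have hInt_g' : IntervalIntegrable
        (fun t => (inner ℝ (fderiv ℝ D (t • B) B) B : ℝ)) volume 0 n :=
      hgderivcont.intervalIntegrable 0 n
    have hsub : Set.uIcc (0:ℝ) (n:ℝ) ⊆ Set.Ici 0 := by
      rw [Set.uIcc_of_le hn0]; exact fun x hx => hx.1
    have hInt_h : IntervalIntegrable h volume 0 n :=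
      ContinuousOn.intervalIntegrable (hcont.mono hsub)
    have hft : ∫ t in (0:ℝ)..(n:ℝ), (inner ℝ (fderiv ℝ D (t • B) B) B : ℝ) = g n - g 0 :=
      intervalIntegral.integral_eq_sub_of_hasDerivAt (fun t _ => hderiv t) hInt_g'
    have hmono : ∫ t in (0:ℝ)..(n:ℝ), h t
        ≤ ∫ t in (0:ℝ)..(n:ℝ), (inner ℝ (fderiv ℝ D (t • B) B) B : ℝ) := by
      apply intervalIntegral.integral_mono_on hn0 hInt_h hInt_g'
      intro t ht
      have ht0 : 0 ≤ t := ht.1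
      have hnorm : ‖t • B‖ = t := by
        rw [norm_smul, hBnorm, Real.norm_eq_abs, abs_of_nonneg ht0, mul_one]
      calc h t = h ‖t • B‖ * ‖B‖ ^ 2 := by rw [hnorm, hBnorm]; ring
        _ ≤ _ := hmon (t • B) B
    have h1 : |g (n:ℝ)| ≤ C₂ := by
      calc |g (n:ℝ)| ≤ ‖D ((n:ℝ) • B)‖ * ‖B‖ := abs_real_inner_le_norm _ _
        _ ≤ C₂ := by rw [hBnorm, mul_one]; exact hbdd _
    have h2 : |g 0| ≤ C₂ := by
      calc |g 0| ≤ ‖D ((0:ℝ) • B)‖ * ‖B‖ := abs_real_inner_le_norm _ _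
        _ ≤ C₂ := by rw [hBnorm, mul_one]; exact hbdd _
    have hb1 := abs_le.mp h1
    have hb2 := abs_le.mp h2
    have := hft ▸ hmono
    linarith [hb1.2, hb2.1, this]
  -- pass to the lintegral
  set f : ℝ → ENNReal := fun s => ENNReal.ofReal (h s) with hfdef
  have hunion : Set.Ioi (0:ℝ) = ⋃ n : ℕ, Set.Ioc (0:ℝ) (n:ℝ) := by
    ext x
    simp only [Set.mem_Ioi, Set.mem_iUnion, Set.mem_Ioc]
    constructor
    · intro hx
      obtain ⟨n, hn⟩ := exists_nat_ge x
      exact ⟨n, hx, hn⟩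
    · rintro ⟨n, hx, _⟩; exact hx
  have hdir : Directed (· ⊆ ·) (fun n : ℕ => Set.Ioc (0:ℝ) (n:ℝ)) := by
    apply Monotone.directed_le
    intro a b hab
    exact Set.Ioc_subset_Ioc_right (Nat.cast_le.mpr hab)
  calc ∫⁻ s in Set.Ioi (0:ℝ), f s
      = volume.withDensity f (Set.Ioi 0) := (withDensity_apply f measurableSet_Ioi).symm
    _ = ⨆ n : ℕ, volume.withDensity f (Set.Ioc 0 (n:ℝ)) := by
        rw [hunion, hdir.measure_iUnion]
    _ ≤ ENNReal.ofReal (2 * C₂) := by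
        apply iSup_le
        intro n
        rw [withDensity_apply f measurableSet_Ioc]
        have hn0 : (0:ℝ) ≤ (n:ℝ) := n.cast_nonneg
        have hInt : IntegrableOn h (Set.Ioc 0 (n:ℝ)) := by
          have : ContinuousOn h (Set.Icc (0:ℝ) (n:ℝ)) :=
            hcont.mono (fun x hx => hx.1)
          exact (this.integrableOn_Icc).mono_set Set.Ioc_subset_Icc_self
        have hnn : 0 ≤ᵐ[volume.restrict (Set.Ioc (0:ℝ) (n:ℝ))] h := by
          rw [Filter.EventuallyLE, ae_restrict_iff' measurableSet_Ioc]
          exact ae_of_all _ fun x hx => (hpos x hx.1.le).le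
        rw [hfdef, ← ofReal_integral_eq_lintegral_ofReal hInt hnn]
        apply ENNReal.ofReal_le_ofReal
        rw [← intervalIntegral.integral_of_le hn0]
        exact key n
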